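/- Let R be a binary relation on subgroups of G refining inclusion, and let N ⊆ G be a normal subgroup such that H ⊆ N for every pair (K,H) ∈ R. Then H ⊆ N for every nontrivial relation (K,H) in the transfer system ⟨R⟩ generated by R. -/
import Mathlib


open Pointwise

/-- Conjugate of a subgroup: `conjS g H = g H g⁻¹`. -/
def conjS {G : Type} [Group G] (g : G) (H : Subgroup G) : Subgroup G :=
  MulAut.conj g • H

/-- A `G`-transfer system: a partial order on the subgroups of `G` refining
inclusion, closed under conjugation and restriction. -/
structure TransferSystem (G : Type) [Group G] where
  rel : Subgroup G → Subgroup G → Prop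
  le_of_rel : ∀ K H : Subgroup G, rel K H → K ≤ H
  refl : ∀ H : Subgroup G, rel H H
  antisymm : ∀ K H : Subgroup G, rel K H → rel H K → K = H
  trans : ∀ J K H : Subgroup G, rel J K → rel K H → rel J H
  conj : ∀ (K H : Subgroup G) (g : G), rel K H → rel (conjS g K) (conjS g H)
  res : ∀ K H L : Subgroup G, rel K H → L ≤ H → rel (K ⊓ L) L

/-- The transfer system generated by a relation `R`, described as a relation:
`genRel R K H` holds iff every transfer system containing `R` relates `K` to
`H`; i.e. it is the smallest transfer system containing `R`. -/
def genRel {G : Type} [Group G] (R : Subgroup G → Subgroup G → Prop)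
    (K H : Subgroup G) : Prop :=
  ∀ T : TransferSystem G, (∀ A B, R A B → T.rel A B) → T.rel K H

/-- Let `R` be a relation on subgroups of `G` refining
inclusion and `N ⊆ G` a normal subgroup such that `H ≤ N` for every pair
`(K, H) ∈ R`.  Then `H ≤ N` for every nontrivial relation `(K, H)` in the
transfer system `⟨R⟩` generated by `R`. -/
theorem stmt7 {G : Type} [Group G] [Finite G]
    (R : Subgroup G → Subgroup G → Prop) (hR : ∀ K H, R K H → K ≤ H)
    (N : Subgroup G) (hN : N.Normal) (hRN : ∀ K H, R K H → H ≤ N) :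
    ∀ K H : Subgroup G, genRel R K H → K ≠ H → H ≤ N := by
  intro K H hgen hne
  let T : TransferSystem G :=
    { rel := fun K H => K ≤ H ∧ (K = H ∨ H ≤ N)
      le_of_rel := fun _ _ h => h.1
      refl := fun H => ⟨le_rfl, Or.inl rfl⟩
      antisymm := fun K H h1 h2 => le_antisymm h1.1 h2.1
      trans := by
        rintro J K H ⟨hJK, hJK2⟩ ⟨hKH, hKH2⟩
        refine ⟨hJK.trans hKH, ?_⟩
        rcases hKH2 with rfl | h
        · rcases hJK2 with rfl | h
          · exact Or.inl rfl
          · exact Or.inr h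
        · exact Or.inr h
      conj := by
        rintro K H g ⟨h1, h2⟩
        refine ⟨?_, ?_⟩
        · intro x hx
          rw [conjS, Subgroup.mem_smul_pointwise_iff_exists] at hx ⊢
          obtain ⟨s, hs, rfl⟩ := hx
          exact ⟨s, h1 hs, rfl⟩
        · rcases h2 with rfl | h
          · exact Or.inl rfl
          · refine Or.inr ?_
            intro x hx
            rw [conjS, Subgroup.mem_smul_pointwise_iff_exists] at hx
            obtain ⟨s, hs, rfl⟩ := hx
            exact hN.conj_mem s (h hs) g
      res := by
        rintro K H L ⟨h1, h2⟩ hL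
        refine ⟨inf_le_right, ?_⟩
        rcases h2 with rfl | h
        · exact Or.inl (inf_eq_right.mpr (hL.trans h1))
        · exact Or.inr (hL.trans h) }
  have := hgen T (fun A B hAB => ⟨hR A B hAB, Or.inr (hRN A B hAB)⟩)
  rcases this.2 with rfl | h
  · exact absurd rfl hne
  · exact h
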